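/- Fix N ∈ ℕ and a nonempty set I ⊂ {1,…,N}² with I ≠ {1,…,N}², and let f = 𝟙_I/√|I| ∈ ℂ^{N×N}. Then for every (k1,k2) ∈ {−⌊N/2⌋+1,…,⌈N/2⌉}²: |(Af)_{k1,k2}| ≤ √|I|/N, and if (k1,k2) ≠ (0,0), additionally |(Af)_{k1,k2}| ≤ Per(I)/( |(k1,k2)|·√|I| ), where |(k1,k2)| = √(k1² + k2²). In particular |(Af)_{k1,k2}| ≤ min{ Per(I)/(|(k1,k2)|·√|I|), √|I|/N } for (k1,k2) ≠ (0,0). -/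

import Mathlib

/- STATEMENT 17: incoherence estimates for the normalized indicator of a set
`I ⊊ {1,…,N}²` with respect to the two-dimensional DFT. -/

/-- Two-dimensional unitary DFT of `x ∈ ℂ^{N×N}` (entries `x j1 j2`, `1 ≤ j1,j2 ≤ N`). -/
noncomputable def dft2 (N : ℕ) (x : ℕ → ℕ → ℂ) (k1 k2 : ℤ) : ℂ :=
  (N : ℂ)⁻¹ * ∑ j1 ∈ Finset.Icc 1 N, ∑ j2 ∈ Finset.Icc 1 N, x j1 j2 *
    Complex.exp (2 * Real.pi * Complex.I * ((j1 : ℂ) * (k1 : ℂ) + (j2 : ℂ) * (k2 : ℂ)) / (N : ℂ))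

/-- Horizontal finite differences with zero boundary at `t1 = N`. -/
def fdH (N : ℕ) (x : ℕ → ℕ → ℂ) (t1 t2 : ℕ) : ℂ :=
  if t1 < N then x (t1 + 1) t2 - x t1 t2 else 0

/-- Vertical finite differences with zero boundary at `t2 = N`. -/
def fdV (N : ℕ) (x : ℕ → ℕ → ℂ) (t1 t2 : ℕ) : ℂ :=
  if t2 < N then x t1 (t2 + 1) - x t1 t2 else 0

/-- Entrywise `ℓ¹` norm over the grid `{1,…,N}²`. -/
noncomputable def l1grid (N : ℕ) (v : ℕ → ℕ → ℂ) : ℝ :=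
  ∑ t1 ∈ Finset.Icc 1 N, ∑ t2 ∈ Finset.Icc 1 N, ‖v t1 t2‖

/-- Indicator function of `I ⊂ {1,…,N}²`. -/
def indic (I : Finset (ℕ × ℕ)) (t1 t2 : ℕ) : ℂ := if (t1, t2) ∈ I then 1 else 0

/-- `Per(I) = ‖𝟙_I‖_{TV,1}`, the anisotropic total variation of the indicator. -/
noncomputable def Per (N : ℕ) (I : Finset (ℕ × ℕ)) : ℝ :=
  l1grid N (fdH N (indic I)) + l1grid N (fdV N (indic I))



lemma aux_sum_Icc_one {M : Type*} [AddCommMonoid M] (N : ℕ) (f : ℕ → M) :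
    ∑ j ∈ Finset.Icc 1 N, f j = ∑ i ∈ Finset.range N, f (i + 1) := by
  induction N with
  | zero => simp
  | succ n ih => rw [Finset.sum_Icc_succ_top (by omega), ih, Finset.sum_range_succ]

lemma aux_sin_lb {t : ℝ} (h0 : 0 ≤ t) (h1 : t ≤ 2/3) : t ≤ Real.sin (Real.pi * t) := by
  have hpi := Real.pi_pos
  rcases le_or_gt t (1/2) with h | h
  · have hb := Real.mul_le_sin (x := Real.pi * t) (by positivity) (by nlinarith)
    have h2 : 2 / Real.pi * (Real.pi * t) = 2 * t := by field_simp
    rw [h2] at hb; linarith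
  · have hs : Real.sin (Real.pi * t) = Real.sin (Real.pi * (1 - t)) := by
      rw [← Real.sin_pi_sub]; ring_nf
    have hb := Real.mul_le_sin (x := Real.pi * (1 - t)) (by nlinarith) (by nlinarith)
    have h2 : 2 / Real.pi * (Real.pi * (1 - t)) = 2 * (1 - t) := by field_simp
    rw [h2] at hb
    rw [hs]; linarith

lemma aux_abs_sq (θ : ℝ) :
    ‖1 - Complex.exp (θ * Complex.I)‖ ^ 2 = 2 - 2 * Real.cos θ := by
  rw [Complex.sq_norm, Complex.normSq_apply]
  simp only [Complex.sub_re, Complex.sub_im, Complex.one_re, Complex.one_im,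
    Complex.exp_ofReal_mul_I_re, Complex.exp_ofReal_mul_I_im]
  nlinarith [Real.sin_sq_add_cos_sq θ]

lemma aux_key_lb (N : ℕ) (hN : 2 ≤ N) (k : ℤ) (hk : 2 * |k| ≤ (N : ℤ) + 1) :
    2 * |(k : ℝ)| / N ≤ ‖1 - Complex.exp (2 * Real.pi * Complex.I * k / N)‖ := by
  have hN0 : (0:ℝ) < N := by positivity
  have harg : (2 * (Real.pi : ℂ) * Complex.I * (k : ℂ) / (N : ℂ)) =
      ((2 * Real.pi * k / N : ℝ) : ℂ) * Complex.I := by push_cast; ring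
  rw [harg]
  set θ : ℝ := 2 * Real.pi * k / N with hθ
  have h3 : (3 : ℤ) * |k| ≤ 2 * N := by
    have h0 : (0:ℤ) ≤ |k| := abs_nonneg k
    omega
  have ht0 : (0:ℝ) ≤ |(k:ℝ)| / N := by positivity
  have ht1 : |(k:ℝ)| / N ≤ 2/3 := by
    rw [div_le_iff₀ hN0]
    have : ((3:ℤ) * |k| : ℝ) ≤ ((2 * N : ℤ) : ℝ) := by exact_mod_cast h3
    push_cast at this
    linarith
  have hsin := aux_sin_lb ht0 ht1
  have hhalf : Real.sin (Real.pi * (|(k:ℝ)| / N)) ^ 2 = Real.sin (θ / 2) ^ 2 := by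
    rcases abs_cases (k : ℝ) with ⟨h, _⟩ | ⟨h, _⟩
    · rw [h, hθ]; ring_nf
    · rw [h, hθ]
      have : Real.pi * (-(k:ℝ) / N) = -(2 * Real.pi * (k:ℝ) / N / 2) := by ring
      rw [this, Real.sin_neg]; ring
  have hcos : 2 - 2 * Real.cos θ = 4 * Real.sin (θ / 2) ^ 2 := by
    have h2 : Real.cos (2 * (θ/2)) = 1 - 2 * Real.sin (θ/2) ^ 2 := by
      rw [Real.cos_two_mul]
      nlinarith [Real.sin_sq_add_cos_sq (θ/2)]
    have h3 : (2 : ℝ) * (θ/2) = θ := by ring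
    rw [h3] at h2
    linarith
  have hsq : (2 * |(k:ℝ)| / N) ^ 2 ≤ ‖1 - Complex.exp (θ * Complex.I)‖ ^ 2 := by
    rw [aux_abs_sq, hcos, ← hhalf]
    have h4 : |(k:ℝ)| / N ≤ Real.sin (Real.pi * (|(k:ℝ)| / N)) := hsin
    have hmm := mul_le_mul h4 h4 ht0 (ht0.trans h4)
    calc (2 * |(k:ℝ)| / N) ^ 2 = 4 * ((|(k:ℝ)| / N) * (|(k:ℝ)| / N)) := by ring
      _ ≤ 4 * (Real.sin (Real.pi * (|(k:ℝ)| / N)) * Real.sin (Real.pi * (|(k:ℝ)| / N))) := by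
          linarith
      _ = 4 * Real.sin (Real.pi * (|(k:ℝ)| / N)) ^ 2 := by ring
  calc 2 * |(k:ℝ)| / N = Real.sqrt ((2 * |(k:ℝ)| / N) ^ 2) := by
        rw [Real.sqrt_sq (by positivity)]
    _ ≤ Real.sqrt (‖1 - Complex.exp (θ * Complex.I)‖ ^ 2) := Real.sqrt_le_sqrt hsq
    _ = _ := Real.sqrt_sq (norm_nonneg _)
lemma aux_abel (y : ℕ → ℂ) (ω : ℂ) (n : ℕ) :
    ω * ∑ i ∈ Finset.range n, (y (i+2) - y (i+1)) * ω ^ (i+1)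
      = ∑ i ∈ Finset.range (n+1), y (i+1) * ω ^ (i+1)
        - ω * y 1
        - ω * ∑ i ∈ Finset.range (n+1), y (i+1) * ω ^ (i+1)
        + y (n+1) * ω ^ (n+2) := by
  induction n with
  | zero => simp; ring
  | succ m ih =>
    rw [Finset.sum_range_succ, Finset.sum_range_succ (f := fun i => y (i+1) * ω ^ (i+1)) (n := m+1)]
    linear_combination ih

lemma aux_row (N : ℕ) (hN : 1 ≤ N) (y : ℕ → ℂ) (ω : ℂ) (hω : ω ^ N = 1) :
    (1 - ω) * ∑ i ∈ Finset.range N, y (i+1) * ω ^ (i+1)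
      = ω * ((∑ i ∈ Finset.range N, (if i+1 < N then y (i+2) - y (i+1) else 0) * ω ^ (i+1))
          + (y 1 - y N)) := by
  obtain ⟨n, rfl⟩ : ∃ n, N = n + 1 := ⟨N - 1, by omega⟩
  have hT : ∑ i ∈ Finset.range (n+1), (if i+1 < n+1 then y (i+2) - y (i+1) else 0) * ω ^ (i+1)
      = ∑ i ∈ Finset.range n, (y (i+2) - y (i+1)) * ω ^ (i+1) := by
    rw [Finset.sum_range_succ, if_neg (by omega), zero_mul, add_zero]
    exact Finset.sum_congr rfl fun i hi => by
      rw [if_pos (by simpa using Finset.mem_range.mp hi)]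
  have h2 : ω ^ (n+2) = ω := by
    have h : ω ^ (n+2) = ω ^ (n+1) * ω := by ring
    rw [h, hω, one_mul]
  have habel := aux_abel y ω n
  rw [h2] at habel
  rw [hT]
  linear_combination -habel

lemma aux_dir (N : ℕ) (hN : 1 ≤ N) (u : ℕ → ℕ → ℂ) (ω τ : ℂ)
    (hω : ω ^ N = 1) (hωa : ‖ω‖ = 1) (hτa : ‖τ‖ = 1) :
    ‖1 - ω‖ *
      ‖∑ j1 ∈ Finset.Icc 1 N, ∑ j2 ∈ Finset.Icc 1 N, u j1 j2 * ω ^ j1 * τ ^ j2‖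
      ≤ 2 * ∑ t1 ∈ Finset.Icc 1 N, ∑ t2 ∈ Finset.Icc 1 N,
          ‖if t1 < N then u (t1+1) t2 - u t1 t2 else 0‖ := by
  set y : ℕ → ℂ := fun j1 => ∑ j2 ∈ Finset.Icc 1 N, u j1 j2 * τ ^ j2 with hy
  set P : ℝ := ∑ t1 ∈ Finset.Icc 1 N, ∑ t2 ∈ Finset.Icc 1 N,
      ‖if t1 < N then u (t1+1) t2 - u t1 t2 else 0‖ with hP
  have hτj : ∀ j : ℕ, ‖τ ^ j‖ = 1 := fun j => by rw [norm_pow, hτa, one_pow]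
  have hPr : P = ∑ i ∈ Finset.range N, ∑ t2 ∈ Finset.Icc 1 N,
      ‖if i + 1 < N then u (i+2) t2 - u (i+1) t2 else 0‖ := by
    rw [hP, aux_sum_Icc_one]
  have hS : (∑ j1 ∈ Finset.Icc 1 N, ∑ j2 ∈ Finset.Icc 1 N, u j1 j2 * ω ^ j1 * τ ^ j2)
      = ∑ i ∈ Finset.range N, y (i+1) * ω ^ (i+1) := by
    rw [aux_sum_Icc_one]
    refine Finset.sum_congr rfl fun i _ => ?_
    rw [hy, Finset.sum_mul]
    exact Finset.sum_congr rfl fun j2 _ => by ring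
  have hinner : ∀ i ∈ Finset.range N,
      ‖(if i+1 < N then y (i+2) - y (i+1) else 0) * ω ^ (i+1)‖
      ≤ ∑ t2 ∈ Finset.Icc 1 N, ‖if i + 1 < N then u (i+2) t2 - u (i+1) t2 else 0‖ := by
    intro i _
    rw [norm_mul, norm_pow, hωa, one_pow, mul_one]
    by_cases h : i + 1 < N
    · rw [if_pos h]
      have hdiff : y (i+2) - y (i+1)
          = ∑ t2 ∈ Finset.Icc 1 N, (u (i+2) t2 - u (i+1) t2) * τ ^ t2 := by
        rw [hy]
        simp only
        rw [← Finset.sum_sub_distrib]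
        exact Finset.sum_congr rfl fun t2 _ => by ring
      rw [hdiff]
      refine le_trans (norm_sum_le _ _) (Finset.sum_le_sum fun t2 _ => ?_)
      rw [norm_mul, hτj, mul_one, if_pos h]
    · rw [if_neg h, norm_zero]
      exact Finset.sum_nonneg fun _ _ => norm_nonneg _
  have hT : ‖∑ i ∈ Finset.range N,
      (if i+1 < N then y (i+2) - y (i+1) else 0) * ω ^ (i+1)‖ ≤ P := by
    rw [hPr]
    exact le_trans (norm_sum_le _ _) (Finset.sum_le_sum hinner)
  have hB : ‖y 1 - y N‖ ≤ P := by
    have hdiff : y 1 - y N = ∑ t2 ∈ Finset.Icc 1 N, (u 1 t2 - u N t2) * τ ^ t2 := by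
      rw [hy]
      simp only
      rw [← Finset.sum_sub_distrib]
      exact Finset.sum_congr rfl fun t2 _ => by ring
    rw [hdiff]
    refine le_trans (norm_sum_le _ _) ?_
    have hcol : ∀ t2, ‖(u 1 t2 - u N t2) * τ ^ t2‖
        ≤ ∑ i ∈ Finset.range N,
            ‖if i + 1 < N then u (i+2) t2 - u (i+1) t2 else 0‖ := by
      intro t2
      rw [norm_mul, hτj, mul_one]
      have h := Finset.sum_range_sub (fun i => u (i+1) t2) (N-1)
      rw [Nat.sub_add_cancel hN] at h
      have h2 : ∑ i ∈ Finset.range (N-1), (u (i+2) t2 - u (i+1) t2) = u N t2 - u 1 t2 := by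
        rw [← h]
      have htel : u 1 t2 - u N t2
          = -∑ i ∈ Finset.range (N-1), (u (i+2) t2 - u (i+1) t2) := by
        rw [h2]; ring
      rw [htel, norm_neg]
      calc ‖∑ i ∈ Finset.range (N-1), (u (i+2) t2 - u (i+1) t2)‖
          ≤ ∑ i ∈ Finset.range (N-1), ‖u (i+2) t2 - u (i+1) t2‖ :=
            norm_sum_le _ _
        _ = ∑ i ∈ Finset.range (N-1),
              ‖if i+1 < N then u (i+2) t2 - u (i+1) t2 else 0‖ :=
            Finset.sum_congr rfl fun i hi => by
              rw [if_pos (by have := Finset.mem_range.mp hi; omega)]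
        _ ≤ ∑ i ∈ Finset.range N,
              ‖if i+1 < N then u (i+2) t2 - u (i+1) t2 else 0‖ :=
            Finset.sum_le_sum_of_subset_of_nonneg
              (Finset.range_subset_range.mpr (by omega))
              (fun _ _ _ => norm_nonneg _)
    calc ∑ t2 ∈ Finset.Icc 1 N, ‖(u 1 t2 - u N t2) * τ ^ t2‖
        ≤ ∑ t2 ∈ Finset.Icc 1 N, ∑ i ∈ Finset.range N,
            ‖if i+1 < N then u (i+2) t2 - u (i+1) t2 else 0‖ :=
          Finset.sum_le_sum fun t2 _ => hcol t2
      _ = P := by rw [hPr, Finset.sum_comm]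
  rw [hS, ← norm_mul, aux_row N hN y ω hω, norm_mul, hωa, one_mul]
  calc ‖(∑ i ∈ Finset.range N,
          (if i+1 < N then y (i+2) - y (i+1) else 0) * ω ^ (i+1)) + (y 1 - y N)‖
      ≤ ‖∑ i ∈ Finset.range N,
          (if i+1 < N then y (i+2) - y (i+1) else 0) * ω ^ (i+1)‖
        + ‖y 1 - y N‖ := norm_add_le _ _
    _ ≤ P + P := add_le_add hT hB
    _ = 2 * P := by ring

set_option maxHeartbeats 1000000 in
theorem stmt17 (N : ℕ) (I : Finset (ℕ × ℕ))
    (hI : I ⊆ Finset.Icc 1 N ×ˢ Finset.Icc 1 N)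
    (hne : I.Nonempty) (hproper : I ≠ Finset.Icc 1 N ×ˢ Finset.Icc 1 N)
    (k1 k2 : ℤ)
    (hk1 : -((N : ℤ) / 2) + 1 ≤ k1 ∧ k1 ≤ ((N : ℤ) + 1) / 2)
    (hk2 : -((N : ℤ) / 2) + 1 ≤ k2 ∧ k2 ≤ ((N : ℤ) + 1) / 2) :
    ‖dft2 N (fun t1 t2 => indic I t1 t2 / (Real.sqrt I.card : ℂ)) k1 k2‖ ≤
        Real.sqrt I.card / N ∧
    (¬(k1 = 0 ∧ k2 = 0) →
      ‖dft2 N (fun t1 t2 => indic I t1 t2 / (Real.sqrt I.card : ℂ)) k1 k2‖ ≤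
        Per N I / (Real.sqrt ((k1 : ℝ) ^ 2 + (k2 : ℝ) ^ 2) * Real.sqrt I.card)) := by
  obtain ⟨hk1l, hk1r⟩ := hk1
  obtain ⟨hk2l, hk2r⟩ := hk2
  have hcard1 : 1 ≤ I.card := Finset.card_pos.mpr hne
  have hcard : I.card < N * N := by
    have hss : I ⊂ Finset.Icc 1 N ×ˢ Finset.Icc 1 N :=
      Finset.ssubset_iff_subset_ne.mpr ⟨hI, hproper⟩
    have h := Finset.card_lt_card hss
    simpa [Nat.card_Icc] using h
  have hN2 : 2 ≤ N := by
    by_contra h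
    push_neg at h
    interval_cases N <;> omega
  have hN1 : 1 ≤ N := by omega
  have hN0R : (0:ℝ) < N := by positivity
  set c : ℝ := Real.sqrt I.card with hc
  have hc0 : 0 < c := Real.sqrt_pos.mpr (by exact_mod_cast hcard1)
  have hcc : c * c = (I.card : ℝ) := Real.mul_self_sqrt (by positivity)
  set ω1 : ℂ := Complex.exp (2 * Real.pi * Complex.I * k1 / N) with hω1
  set ω2 : ℂ := Complex.exp (2 * Real.pi * Complex.I * k2 / N) with hω2
  set S : ℂ := ∑ j1 ∈ Finset.Icc 1 N, ∑ j2 ∈ Finset.Icc 1 N,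
      indic I j1 j2 * ω1 ^ j1 * ω2 ^ j2 with hSdef
  have hunit : ∀ k : ℤ, ‖Complex.exp (2 * Real.pi * Complex.I * k / N)‖ = 1 := by
    intro k
    have harg : (2 * (Real.pi:ℂ) * Complex.I * (k:ℂ) / (N:ℂ))
        = ((2 * Real.pi * k / N : ℝ) : ℂ) * Complex.I := by push_cast; ring
    rw [harg, Complex.norm_exp_ofReal_mul_I]
  have hNC : ((N:ℂ)) ≠ 0 := Nat.cast_ne_zero.mpr (by omega)
  have hroot : ∀ k : ℤ, (Complex.exp (2 * Real.pi * Complex.I * k / N)) ^ N = 1 := by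
    intro k
    rw [← Complex.exp_nat_mul]
    have harg : (N:ℂ) * (2 * (Real.pi:ℂ) * Complex.I * (k:ℂ) / (N:ℂ))
        = (k:ℂ) * (2 * (Real.pi:ℂ) * Complex.I) := by
      field_simp
    rw [harg, Complex.exp_int_mul_two_pi_mul_I]
  have hE : ∀ j1 j2 : ℕ,
      Complex.exp (2 * (Real.pi:ℂ) * Complex.I * ((j1:ℂ) * (k1:ℂ) + (j2:ℂ) * (k2:ℂ)) / (N:ℂ))
        = ω1 ^ j1 * ω2 ^ j2 := by
    intro j1 j2
    rw [hω1, hω2, ← Complex.exp_nat_mul, ← Complex.exp_nat_mul, ← Complex.exp_add]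
    congr 1
    ring
  have hsum : ∑ j1 ∈ Finset.Icc 1 N, ∑ j2 ∈ Finset.Icc 1 N,
      (indic I j1 j2 / (c:ℂ)) *
        Complex.exp (2 * (Real.pi:ℂ) * Complex.I * ((j1:ℂ) * (k1:ℂ) + (j2:ℂ) * (k2:ℂ)) / (N:ℂ))
      = ((c:ℝ):ℂ)⁻¹ * S := by
    rw [hSdef, Finset.mul_sum]
    refine Finset.sum_congr rfl fun j1 _ => ?_
    rw [Finset.mul_sum]
    refine Finset.sum_congr rfl fun j2 _ => ?_
    rw [hE j1 j2]
    ring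
  have habs : ‖dft2 N (fun t1 t2 => indic I t1 t2 / ((c:ℝ):ℂ)) k1 k2‖
      = ‖S‖ / (N * c) := by
    simp only [dft2]
    rw [hsum, norm_mul, norm_mul, norm_inv, norm_inv, Complex.norm_natCast, Complex.norm_real,
      Real.norm_of_nonneg hc0.le]
    field_simp
  have habs_term : ∀ j1 j2 : ℕ, ‖indic I j1 j2 * ω1 ^ j1 * ω2 ^ j2‖
      = (if (j1, j2) ∈ I then (1:ℝ) else 0) := by
    intro j1 j2
    rw [norm_mul, norm_mul, norm_pow, norm_pow, hω1, hω2, hunit k1, hunit k2, one_pow, one_pow,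
      mul_one, mul_one, indic]
    split <;> simp
  have hS_le : ‖S‖ ≤ (I.card : ℝ) := by
    have h1 : ‖S‖ ≤ ∑ j1 ∈ Finset.Icc 1 N, ∑ j2 ∈ Finset.Icc 1 N,
        (if (j1, j2) ∈ I then (1:ℝ) else 0) := by
      rw [hSdef]
      refine le_trans (norm_sum_le _ _) (Finset.sum_le_sum fun j1 _ => ?_)
      refine le_trans (norm_sum_le _ _) (Finset.sum_le_sum fun j2 _ => ?_)
      rw [habs_term]
    have h2 : ∑ j1 ∈ Finset.Icc 1 N, ∑ j2 ∈ Finset.Icc 1 N,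
        (if (j1, j2) ∈ I then (1:ℝ) else 0) = (I.card : ℝ) := by
      have hps := Finset.sum_product (Finset.Icc 1 N) (Finset.Icc 1 N)
        (fun p : ℕ × ℕ => if p ∈ I then (1:ℝ) else 0)
      beta_reduce at hps
      rw [← hps, Finset.sum_ite_mem, Finset.inter_eq_right.mpr hI, Finset.sum_const]
      simp
    rw [h2] at h1
    exact h1
  constructor
  · rw [habs]
    have hnum : ‖S‖ ≤ c * c := by rw [hcc]; exact hS_le
    calc ‖S‖ / (N * c) ≤ (c * c) / (N * c) :=
        (div_le_div_iff_of_pos_right (mul_pos hN0R hc0)).mpr hnum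
      _ = c / N := by
        rw [mul_comm (N:ℝ) c, mul_div_mul_left _ _ hc0.ne']
  · intro hk0
    have hb1 : ‖1 - ω1‖ * ‖S‖ ≤ 2 * l1grid N (fdH N (indic I)) := by
      have h := aux_dir N hN1 (indic I) ω1 ω2 (by rw [hω1]; exact hroot k1)
        (by rw [hω1]; exact hunit k1) (by rw [hω2]; exact hunit k2)
      simp only [l1grid, fdH]
      rw [hSdef]
      exact h
    have hb2 : ‖1 - ω2‖ * ‖S‖ ≤ 2 * l1grid N (fdV N (indic I)) := by
      have h := aux_dir N hN1 (fun a b => indic I b a) ω2 ω1 (by rw [hω2]; exact hroot k2)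
        (by rw [hω2]; exact hunit k2) (by rw [hω1]; exact hunit k1)
      have hswap : (∑ j1 ∈ Finset.Icc 1 N, ∑ j2 ∈ Finset.Icc 1 N,
          indic I j2 j1 * ω2 ^ j1 * ω1 ^ j2) = S := by
        rw [Finset.sum_comm, hSdef]
        exact Finset.sum_congr rfl fun j1 _ => Finset.sum_congr rfl fun j2 _ => by ring
      have hswap2 : l1grid N (fdV N (indic I)) = ∑ t1 ∈ Finset.Icc 1 N, ∑ t2 ∈ Finset.Icc 1 N,
          ‖if t1 < N then indic I t2 (t1+1) - indic I t2 t1 else 0‖ := by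
        simp only [l1grid, fdV]
        exact Finset.sum_comm
      rw [hswap2, ← hswap]
      simpa using h
    have hSnn := norm_nonneg S
    have hlb1 : 2 * |(k1:ℝ)| / N ≤ ‖1 - ω1‖ := by
      rw [hω1]
      exact aux_key_lb N hN2 k1 (by rcases abs_cases k1 with ⟨h,_⟩|⟨h,_⟩ <;> omega)
    have hlb2 : 2 * |(k2:ℝ)| / N ≤ ‖1 - ω2‖ := by
      rw [hω2]
      exact aux_key_lb N hN2 k2 (by rcases abs_cases k2 with ⟨h,_⟩|⟨h,_⟩ <;> omega)
    have hm1 : |(k1:ℝ)| * ‖S‖ ≤ N * l1grid N (fdH N (indic I)) := by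
      have h2a : 2 * |(k1:ℝ)| ≤ ‖1 - ω1‖ * N := (div_le_iff₀ hN0R).mp hlb1
      nlinarith [mul_le_mul_of_nonneg_right h2a hSnn, mul_le_mul_of_nonneg_left hb1 hN0R.le]
    have hm2 : |(k2:ℝ)| * ‖S‖ ≤ N * l1grid N (fdV N (indic I)) := by
      have h2a : 2 * |(k2:ℝ)| ≤ ‖1 - ω2‖ * N := (div_le_iff₀ hN0R).mp hlb2
      nlinarith [mul_le_mul_of_nonneg_right h2a hSnn, mul_le_mul_of_nonneg_left hb2 hN0R.le]
    have hsum_dir : (|(k1:ℝ)| + |(k2:ℝ)|) * ‖S‖ ≤ N * Per N I := by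
      simp only [Per]
      nlinarith [hm1, hm2]
    set r : ℝ := Real.sqrt ((k1:ℝ)^2 + (k2:ℝ)^2) with hr
    have hrpos : 0 < r := by
      apply Real.sqrt_pos.mpr
      rcases not_and_or.mp hk0 with h | h
      · have h1 : (k1:ℝ) ≠ 0 := Int.cast_ne_zero.mpr h
        positivity
      · have h1 : (k2:ℝ) ≠ 0 := Int.cast_ne_zero.mpr h
        positivity
    have hr_le : r ≤ |(k1:ℝ)| + |(k2:ℝ)| := by
      have h1 : (k1:ℝ)^2 + (k2:ℝ)^2 ≤ (|(k1:ℝ)| + |(k2:ℝ)|)^2 := by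
        nlinarith [sq_abs (k1:ℝ), sq_abs (k2:ℝ),
          mul_nonneg (abs_nonneg (k1:ℝ)) (abs_nonneg (k2:ℝ))]
      calc r ≤ Real.sqrt ((|(k1:ℝ)| + |(k2:ℝ)|)^2) := Real.sqrt_le_sqrt h1
        _ = |(k1:ℝ)| + |(k2:ℝ)| := Real.sqrt_sq (by positivity)
    have hrs : r * ‖S‖ ≤ N * Per N I :=
      le_trans (mul_le_mul_of_nonneg_right hr_le hSnn) hsum_dir
    rw [habs, div_le_div_iff₀ (mul_pos hN0R hc0) (mul_pos hrpos hc0)]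
    nlinarith [mul_le_mul_of_nonneg_right hrs hc0.le]
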